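/- Let A(x) = (a_{ij}(x)) be an n × n matrix whose entries are ℓ-times differentiable (or polynomial) functions of x. Then the ℓ-th derivative of det(A) equals ∑_{ℓ_1 + ... + ℓ_n = ℓ} multinomial(ℓ; ℓ_1, ..., ℓ_n) · det(B), where B is the matrix whose i-th row is the ℓ_i-th derivative of the i-th row of A. -/

import Mathlib

open Polynomial Finset

/-- Leibniz formula for the iterated derivative of a finite product of polynomials. -/
lemma iterate_derivative_finset_prod {R : Type*} [CommRing R] {α : Type*} [DecidableEq α]
    (s : Finset α) (f : α → Polynomial R) (ℓ : ℕ) :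
    Polynomial.derivative^[ℓ] (∏ i ∈ s, f i)
      = ∑ k ∈ Finset.piAntidiag s ℓ,
          ((Nat.multinomial s k : ℕ) : Polynomial R) *
            ∏ i ∈ s, Polynomial.derivative^[k i] (f i) := by
  induction s using Finset.cons_induction generalizing ℓ with
  | empty =>
    cases ℓ with
    | zero => simp
    | succ m =>
      rw [prod_empty, Polynomial.iterate_derivative_one (Nat.succ_pos m)]
      simp
  | cons a s ha ih =>
    rw [prod_cons, mul_comm, Polynomial.iterate_derivative_mul,
      piAntidiag_cons ha, sum_disjiUnion, Finset.Nat.sum_antidiagonal_eq_sum_range_succ_mk]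
    refine Finset.sum_congr rfl fun k hk => ?_
    rw [Finset.mem_range, Nat.lt_succ_iff] at hk
    rw [ih, sum_mul, smul_sum, sum_map]
    refine Finset.sum_congr rfl fun g hg => ?_
    rw [Finset.mem_piAntidiag] at hg
    have hga : g a = 0 := by
      by_contra h
      exact ha (hg.2 a h)
    simp only [addRightEmbedding_apply]
    have h1 : (g + fun t => if t = a then k else 0) a = k := by simp [hga]
    have h2 : ∀ i ∈ s, (g + fun t => if t = a then k else 0) i = g i := fun i hi => by
      have : i ≠ a := fun h => ha (h ▸ hi)
      simp [this]
    have hm : Nat.multinomial (Finset.cons a s ha) (g + fun t => if t = a then k else 0)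
        = ℓ.choose k * Nat.multinomial s g := by
      rw [Nat.multinomial_cons, h1,
        Nat.multinomial_congr (fun i hi => (h2 i hi)),
        Finset.sum_congr rfl (fun i hi => h2 i hi), hg.1,
        Nat.add_sub_cancel' hk]
    have hp : (∏ i ∈ s, Polynomial.derivative^[(g + fun t => if t = a then k else 0) i] (f i))
        = ∏ i ∈ s, Polynomial.derivative^[g i] (f i) :=
      Finset.prod_congr rfl fun i hi => by rw [h2 i hi]
    rw [prod_cons, h1, hm, hp]
    push_cast
    rw [nsmul_eq_mul]
    ring

lemma multinomial_comp_perm {m : ℕ} (σ : Equiv.Perm (Fin m)) (k : Fin m → ℕ) :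
    Nat.multinomial Finset.univ (k ∘ σ) = Nat.multinomial Finset.univ k := by
  simp only [Nat.multinomial, Function.comp]
  rw [Equiv.sum_comp σ k, Equiv.prod_comp σ fun i => Nat.factorial (k i)]

/-- ℓ-th derivative of a determinant: a Leibniz-type formula with multinomial
coefficients, rows differentiated ℓ_i times with ℓ_1 + ... + ℓ_n = ℓ. -/
theorem iterated_derivative_det {R : Type*} [CommRing R] (n ℓ : ℕ)
    (A : Matrix (Fin n) (Fin n) (Polynomial R)) :
    (fun q : Polynomial R => Polynomial.derivative q)^[ℓ] A.det
      = ∑ c ∈ Finset.Nat.antidiagonalTuple n ℓ,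
          ((Nat.multinomial Finset.univ c : ℕ) : Polynomial R) *
            Matrix.det (fun i j =>
              (fun q : Polynomial R => Polynomial.derivative q)^[c i] (A i j)) := by
  classical
  rw [← Finset.piAntidiag_univ_fin_eq_antidiagonalTuple, Matrix.det_apply']
  have hcoe : (fun q : Polynomial R => Polynomial.derivative q)^[ℓ]
      = ⇑((Polynomial.derivative : Polynomial R →ₗ[R] Polynomial R) ^ ℓ) := by
    funext p; exact (Module.End.pow_apply _ _ _).symm
  rw [hcoe, map_sum]
  have step : ∀ σ : Equiv.Perm (Fin n),
      ((Polynomial.derivative : Polynomial R →ₗ[R] Polynomial R) ^ ℓ)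
        (((Equiv.Perm.sign σ : ℤ) : Polynomial R) * ∏ i, A (σ i) i)
      = ((Equiv.Perm.sign σ : ℤ) : Polynomial R) *
          ∑ c ∈ Finset.piAntidiag Finset.univ ℓ,
            ((Nat.multinomial Finset.univ c : ℕ) : Polynomial R) *
              ∏ i, Polynomial.derivative^[c (σ i)] (A (σ i) i) := by
    intro σ
    rw [← zsmul_eq_mul, map_zsmul, zsmul_eq_mul]
    congr 1
    rw [← hcoe]
    rw [iterate_derivative_finset_prod Finset.univ (fun i => A (σ i) i) ℓ]
    refine Finset.sum_equiv (Equiv.arrowCongr σ (Equiv.refl ℕ)) ?_ ?_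
    · intro k
      simp [Finset.mem_piAntidiag, Equiv.sum_comp σ.symm k]
      have he : (Equiv.arrowCongr σ (Equiv.refl ℕ)) k = k ∘ σ.symm := by
        ext i; simp
      rw [he]
      exact Iff.of_eq (congrArg (· = ℓ) (Equiv.sum_comp σ.symm k).symm)
    · intro k hk
      have he : (Equiv.arrowCongr σ (Equiv.refl ℕ)) k = k ∘ σ.symm := by
        ext i; simp
      rw [he, multinomial_comp_perm σ.symm k]
      congr 1
      exact Finset.prod_congr rfl fun i _ => by simp
  rw [Finset.sum_congr rfl fun σ _ => step σ]
  simp_rw [Finset.mul_sum]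
  rw [Finset.sum_comm]
  refine Finset.sum_congr rfl fun c _ => ?_
  refine Eq.trans ?_ (congrArg (fun d => _ * d) (Matrix.det_apply' (Matrix.of fun i j =>
    (fun q : Polynomial R => Polynomial.derivative q)^[c i] (A i j))).symm)
  simp only [Finset.mul_sum, Matrix.of_apply]
  refine Finset.sum_congr rfl fun σ _ => ?_
  ring
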